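/- Fix w ∈ ℝⁿ and β ∈ (0,1), and suppose L(w,·) is measurable and μ-integrable and Φ(w,·) is continuous. Then the infimum over α ∈ ℝ of F_β(w,α) is attained and equals CVaR_β(w); that is, min_α F_β(w,α) = φ_β(w) = (1−β)⁻¹ ∫_{{r : L(w,r) ≥ VaR_β(w)}} L(w,r) dμ(r). -/

import Mathlib

open MeasureTheory

/-- For fixed `w` and `β ∈ (0,1)`, with `L w` measurable and integrable and
`Φ(w,·)` continuous, the infimum over `α` of `F_β(w,α)` is attained and equals
`CVaR_β(w) = (1-β)⁻¹ ∫_{L(w,r) ≥ VaR_β(w)} L w r ∂μ`, where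
`VaR_β(w) = min {α | Φ(w,α) ≥ β}` (the least such `α`, expressed as `sInf`). -/
theorem stmt_2 {n : ℕ} (μ : Measure (Fin n → ℝ)) [IsProbabilityMeasure μ]
    (L : (Fin n → ℝ) → (Fin n → ℝ) → ℝ) (w : Fin n → ℝ) (β : ℝ)
    (hβ : β ∈ Set.Ioo (0 : ℝ) 1)
    (hmeas : Measurable (L w)) (hint : Integrable (L w) μ)
    (hcont : Continuous (fun α : ℝ => (μ {r | L w r ≤ α}).toReal)) :
    IsLeast
      (Set.range (fun α : ℝ => α + (1 - β)⁻¹ * ∫ r, max (L w r - α) 0 ∂μ))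
      ((1 - β)⁻¹ *
        ∫ r in {r | sInf {a : ℝ | β ≤ (μ {r' | L w r' ≤ a}).toReal} ≤ L w r},
          L w r ∂μ) := by
  obtain ⟨hβ0, hβ1⟩ := hβ
  set Φ : ℝ → ℝ := fun α => (μ {r' | L w r' ≤ α}).toReal with hΦdef
  set S : Set ℝ := {a : ℝ | β ≤ Φ a} with hSdef
  set α0 : ℝ := sInf S with hα0def
  have hβ1' : (0:ℝ) < 1 - β := by linarith
  have hc1 : (1 - β)⁻¹ * (1 - β) = 1 := inv_mul_cancel₀ (ne_of_gt hβ1')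
  have hcpos : (0:ℝ) < (1 - β)⁻¹ := inv_pos.2 hβ1'
  have hΦcont : Continuous Φ := hcont
  have hΦmono : Monotone Φ := fun a b hab =>
    ENNReal.toReal_mono (measure_ne_top μ _)
      (measure_mono fun r hr => le_trans hr hab)
  -- S nonempty
  have hS_ne : S.Nonempty := by
    by_contra h
    have hlt : ∀ a : ℝ, Φ a < β := by
      intro a
      by_contra hle
      exact h ⟨a, le_of_not_gt hle⟩
    have hmono : Monotone fun k : ℕ => {r' | L w r' ≤ (k : ℝ)} := by
      intro a b hab r hr
      simp only [Set.mem_setOf_eq] at hr ⊢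
      exact le_trans hr (by exact_mod_cast hab)
    have hUnion : (⋃ k : ℕ, {r' | L w r' ≤ (k : ℝ)}) = Set.univ := by
      ext r
      simp only [Set.mem_iUnion, Set.mem_setOf_eq, Set.mem_univ, iff_true]
      exact exists_nat_ge (L w r)
    have := hmono.measure_iUnion (μ := μ)
    rw [hUnion, measure_univ] at this
    have hle : (1 : ENNReal) ≤ ENNReal.ofReal β := by
      rw [this]
      refine iSup_le fun k => ?_
      rw [ENNReal.le_ofReal_iff_toReal_le (measure_ne_top μ _) (le_of_lt hβ0)]
      exact le_of_lt (hlt k)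
    have : ENNReal.ofReal β < 1 := ENNReal.ofReal_lt_one.2 hβ1
    exact absurd hle (not_le.2 this)
  -- exists b with Φ b < β
  have hb : ∃ b : ℝ, Φ b < β := by
    by_contra h
    push_neg at h
    have hanti : Antitone fun k : ℕ => {r' | L w r' ≤ -(k : ℝ)} := by
      intro a b hab r hr
      simp only [Set.mem_setOf_eq] at hr ⊢
      refine le_trans hr (by simp; exact_mod_cast hab)
    have hInter : (⋂ k : ℕ, {r' | L w r' ≤ -(k : ℝ)}) = ∅ := by
      ext r
      simp only [Set.mem_iInter, Set.mem_setOf_eq, Set.mem_empty_iff_false, iff_false, not_forall]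
      obtain ⟨k, hk⟩ := exists_nat_gt (-(L w r))
      exact ⟨k, by push_neg; linarith⟩
    have := hanti.measure_iInter (μ := μ)
      (fun k => (hmeas measurableSet_Iic).nullMeasurableSet)
      ⟨0, measure_ne_top μ _⟩
    rw [hInter, measure_empty] at this
    have hge : ENNReal.ofReal β ≤ 0 := by
      rw [this]
      refine le_iInf fun k => ?_
      rw [← ENNReal.ofReal_toReal (measure_ne_top μ {r' | L w r' ≤ -(k:ℝ)})]
      exact ENNReal.ofReal_le_ofReal (h _)
    rw [ENNReal.ofReal_le_iff_le_toReal (by norm_num)] at hge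
    simp at hge
    linarith
  have hS_bdd : BddBelow S := by
    obtain ⟨b, hb'⟩ := hb
    refine ⟨b, fun a ha => ?_⟩
    by_contra hab
    push_neg at hab
    have := hΦmono (le_of_lt hab)
    have : β ≤ Φ b := le_trans ha this
    linarith
  have hS_closed : IsClosed S := isClosed_le continuous_const hΦcont
  have hmemS : α0 ∈ S := hS_closed.csInf_mem hS_ne hS_bdd
  have hΦα0_ge : β ≤ Φ α0 := hmemS
  have hnotS : ∀ a, a < α0 → Φ a < β := by
    intro a ha
    by_contra hle
    exact absurd (csInf_le hS_bdd (le_of_not_gt hle)) (not_le.2 ha)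
  have hΦα0_le : Φ α0 ≤ β := by
    have htend : Filter.Tendsto Φ (nhdsWithin α0 (Set.Iio α0)) (nhds (Φ α0)) :=
      (hΦcont.continuousAt).continuousWithinAt
    refine le_of_tendsto htend ?_
    filter_upwards [self_mem_nhdsWithin] with a ha
    exact le_of_lt (hnotS a ha)
  have hΦα0 : Φ α0 = β := le_antisymm hΦα0_le hΦα0_ge
  set A : Set (Fin n → ℝ) := {r | α0 ≤ L w r} with hAdef
  have hA : MeasurableSet A := hmeas measurableSet_Ici
  -- μ Aᶜ = measure of {L < α0}
  have hAc : Aᶜ = {r | L w r < α0} := by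
    ext r; simp [hAdef]
  have hmuAc_le : (μ Aᶜ).toReal ≤ β := by
    rw [hAc]
    have hmono : Monotone fun k : ℕ => {r' | L w r' ≤ α0 - 1/(k+1)} := by
      intro a b hab r hr
      simp only [Set.mem_setOf_eq] at hr ⊢
      refine le_trans hr ?_
      have : (1:ℝ)/(b+1) ≤ 1/(a+1) := by
        apply one_div_le_one_div_of_le (by positivity)
        exact_mod_cast Nat.add_le_add_right hab 1
      linarith
    have hUnion : (⋃ k : ℕ, {r' | L w r' ≤ α0 - 1/(k+1)}) = {r | L w r < α0} := by
      ext r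
      simp only [Set.mem_iUnion, Set.mem_setOf_eq]
      constructor
      · rintro ⟨k, hk⟩
        have : (0:ℝ) < 1/(k+1) := by positivity
        linarith
      · intro hr
        obtain ⟨k, hk⟩ := exists_nat_one_div_lt (sub_pos.2 hr)
        exact ⟨k, by push_cast at hk ⊢; linarith⟩
    rw [← hUnion, hmono.measure_iUnion]
    have : (⨆ k : ℕ, μ {r' | L w r' ≤ α0 - 1/(k+1)}) ≤ ENNReal.ofReal β := by
      refine iSup_le fun k => ?_
      rw [ENNReal.le_ofReal_iff_toReal_le (measure_ne_top μ _) (le_of_lt hβ0)]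
      refine le_of_lt (hnotS _ ?_)
      have : (0:ℝ) < 1/((k:ℝ)+1) := by positivity
      linarith
    calc ((⨆ k : ℕ, μ {r' | L w r' ≤ α0 - 1/(k+1)})).toReal
        ≤ (ENNReal.ofReal β).toReal := ENNReal.toReal_mono ENNReal.ofReal_ne_top this
      _ = β := ENNReal.toReal_ofReal (le_of_lt hβ0)
  have hmuAc_ge : β ≤ (μ Aᶜ).toReal := by
    rw [hAc]
    have htend : Filter.Tendsto Φ (nhdsWithin α0 (Set.Iio α0)) (nhds β) := by
      rw [← hΦα0]
      exact (hΦcont.continuousAt).continuousWithinAt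
    refine le_of_tendsto htend ?_
    filter_upwards [self_mem_nhdsWithin] with a ha
    refine ENNReal.toReal_mono (measure_ne_top μ _)
      (measure_mono fun r hr => ?_)
    simp only [Set.mem_setOf_eq] at hr ⊢
    exact lt_of_le_of_lt hr ha
  have hmuAc : (μ Aᶜ).toReal = β := le_antisymm hmuAc_le hmuAc_ge
  have hmuA : (μ A).toReal = 1 - β := by
    have hsum : (μ A).toReal + (μ Aᶜ).toReal = 1 := by
      rw [← ENNReal.toReal_add (measure_ne_top μ _) (measure_ne_top μ _),
        measure_add_measure_compl hA, measure_univ, ENNReal.toReal_one]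
    rw [hmuAc] at hsum
    linarith
  -- integral identity at a given α
  have hIdent : ∀ α : ℝ, ∫ r, max (L w r - α) 0 ∂μ =
      (∫ r in {r | α ≤ L w r}, L w r ∂μ) - α * (μ {r | α ≤ L w r}).toReal := by
    intro α
    have hEmeas : MeasurableSet {r | α ≤ L w r} := hmeas measurableSet_Ici
    have hfun : (fun r => max (L w r - α) 0) =
        Set.indicator {r | α ≤ L w r} (fun r => L w r - α) := by
      ext r
      simp only [Set.indicator_apply, Set.mem_setOf_eq]
      split_ifs with h
      · exact max_eq_left (sub_nonneg.2 h)
      · exact max_eq_right (sub_nonpos.2 (le_of_not_ge h))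
    rw [hfun, integral_indicator hEmeas,
      integral_sub hint.integrableOn (integrableOn_const (measure_ne_top μ _)),
      setIntegral_const, measureReal_def, smul_eq_mul, mul_comm]
  -- indicator integral
  have hIndInt : Integrable (A.indicator fun _ => (1:ℝ)) μ :=
    (integrable_const (1:ℝ)).indicator hA
  have hIndVal : ∫ r, A.indicator (fun _ => (1:ℝ)) r ∂μ = 1 - β := by
    rw [integral_indicator hA, setIntegral_const, measureReal_def, smul_eq_mul, mul_one, hmuA]
  have hmaxInt : ∀ α : ℝ, Integrable (fun r => max (L w r - α) 0) μ := fun α =>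
    (hint.sub (integrable_const α)).pos_part
  -- value at α0
  have hVal : α0 + (1 - β)⁻¹ * ∫ r, max (L w r - α0) 0 ∂μ =
      (1 - β)⁻¹ * ∫ r in A, L w r ∂μ := by
    rw [hIdent α0]
    have : {r | α0 ≤ L w r} = A := rfl
    rw [this, hmuA]
    have h2 : (1-β)⁻¹ * (α0 * (1-β)) = α0 := by
      rw [mul_comm α0, ← mul_assoc, hc1, one_mul]
    rw [mul_sub, h2]
    ring
  constructor
  · exact ⟨α0, hVal⟩
  · rintro y ⟨α, rfl⟩
    -- pointwise inequality: max(x-α0,0) + (α0-α)*1_A ≤ max(x-α,0)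
    have hptwise : ∀ r, max (L w r - α0) 0 + (α0 - α) * A.indicator (fun _ => (1:ℝ)) r
        ≤ max (L w r - α) 0 := by
      intro r
      rw [Set.indicator_apply]
      by_cases h : r ∈ A
      · rw [if_pos h]
        have h' : α0 ≤ L w r := h
        rw [max_eq_left (sub_nonneg.2 h')]
        have h1 : L w r - α ≤ max (L w r - α) 0 := le_max_left _ _
        linarith
      · rw [if_neg h]
        have h' : L w r < α0 := not_le.1 h
        rw [max_eq_right (sub_nonpos.2 h'.le)]
        simpa using le_max_left (L w r - α) 0
    have hintLHS : Integrable
        (fun r => max (L w r - α0) 0 + (α0 - α) * A.indicator (fun _ => (1:ℝ)) r) μ :=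
      (hmaxInt α0).add (hIndInt.const_mul _)
    have hmono := integral_mono hintLHS (hmaxInt α) hptwise
    rw [integral_add (hmaxInt α0) (hIndInt.const_mul _), integral_const_mul, hIndVal,
      hIdent α0] at hmono
    have hAeq : {r | α0 ≤ L w r} = A := rfl
    rw [hAeq, hmuA] at hmono
    -- hmono : ∫_A L - α0*(1-β) + (α0-α)*(1-β) ≤ ∫ max(L-α)0
    have := mul_le_mul_of_nonneg_left hmono (le_of_lt hcpos)
    -- (1-β)⁻¹ * (∫_A L - α(1-β)) ≤ (1-β)⁻¹ ∫max
    have hexp : (1 - β)⁻¹ * ((∫ r in A, L w r ∂μ) - α0 * (1-β) + (α0 - α) * (1-β)) =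
        (1 - β)⁻¹ * (∫ r in A, L w r ∂μ) - α := by
      have heq : (∫ r in A, L w r ∂μ) - α0 * (1-β) + (α0 - α) * (1-β) =
          (∫ r in A, L w r ∂μ) - α * (1-β) := by ring
      have h2 : (1-β)⁻¹ * (α * (1-β)) = α := by
        rw [mul_comm α, ← mul_assoc, hc1, one_mul]
      rw [heq, mul_sub, h2]
    rw [hexp] at this
    linarith
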